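/- arXiv:1501.03764 — 2 statements merged into one kernel-verified Lean document; each statement's English description precedes it below -/
import Mathlib

section
/- Let F ⊆ ℝ^d be the attractor of a self-similar system S = {S_1, …, S_N}, N ≥ 2, satisfying the open set condition, and suppose the Minkowski dimension of F equals d. Then F is Minkowski measurable of dimension d with Minkowski content M_d(F) = λ_d(F) > 0. -/
open MeasureTheory Filter Set Topology

/-- `Euc d` is Euclidean space `ℝ^d`. -/
abbrev Euc (d : ℕ) : Type := EuclideanSpace ℝ (Fin d)

/-- The `ε`-parallel set `A_ε = {x : dist(x,A) ≤ ε}`. -/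
def pSet {d : ℕ} (A : Set (Euc d)) (ε : ℝ) : Set (Euc d) :=
  {x | Metric.infDist x A ≤ ε}

open Pointwise RealInnerProductSpace

/-- A similarity with ratio `r > 0` decomposes as translation ∘ scaling ∘ linear isometry. -/
lemma sim_decomp {d : ℕ} {S : Euc d → Euc d} {r : ℝ} (hr : 0 < r)
    (hsim : ∀ x y, dist (S x) (S y) = r * dist x y) :
    ∃ e : Euc d ≃ₗᵢ[ℝ] Euc d, ∀ x, S x = S 0 + r • e x := by
  set T : Euc d → Euc d := fun x => r⁻¹ • (S x - S 0) with hTdef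
  have hTnorm : ∀ x y : Euc d, ‖T x - T y‖ = ‖x - y‖ := by
    intro x y
    have : T x - T y = r⁻¹ • (S x - S y) := by
      simp only [hTdef, ← smul_sub]; congr 1; abel
    have h1 := hsim x y
    rw [dist_eq_norm, dist_eq_norm] at h1
    rw [this, norm_smul, h1, norm_inv, Real.norm_eq_abs, abs_of_pos hr]
    field_simp
  have hT0 : T 0 = 0 := by simp [hTdef]
  have hTn : ∀ x : Euc d, ‖T x‖ = ‖x‖ := by
    intro x
    have := hTnorm x 0
    simpa [hT0] using this
  have hinner : ∀ x y : Euc d, ⟪T x, T y⟫ = ⟪x, y⟫ := by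
    intro x y
    rw [real_inner_eq_norm_mul_self_add_norm_mul_self_sub_norm_sub_mul_self_div_two,
      real_inner_eq_norm_mul_self_add_norm_mul_self_sub_norm_sub_mul_self_div_two (x := x),
      hTn, hTn, hTnorm]
  have hadd : ∀ x y : Euc d, T (x + y) = T x + T y := by
    intro x y
    have h2 : ‖T (x + y) - (T x + T y)‖ ^ 2 = 0 := by
      rw [← real_inner_self_eq_norm_sq]
      simp only [inner_sub_left, inner_sub_right, inner_add_left, inner_add_right, hinner]
      ring
    have h3 := pow_eq_zero_iff (n := 2) (by norm_num) |>.mp h2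
    rw [norm_eq_zero, sub_eq_zero] at h3
    exact h3
  have hsmul : ∀ (c : ℝ) (x : Euc d), T (c • x) = c • T x := by
    intro c x
    have h2 : ‖T (c • x) - c • T x‖ ^ 2 = 0 := by
      rw [← real_inner_self_eq_norm_sq]
      simp only [inner_sub_left, inner_sub_right, real_inner_smul_left, real_inner_smul_right,
        hinner]
      ring
    have h3 := pow_eq_zero_iff (n := 2) (by norm_num) |>.mp h2
    rw [norm_eq_zero, sub_eq_zero] at h3
    exact h3
  let f : Euc d →ₗ[ℝ] Euc d :=
    { toFun := T, map_add' := hadd, map_smul' := hsmul }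
  let li : Euc d →ₗᵢ[ℝ] Euc d := ⟨f, hTn⟩
  refine ⟨li.toLinearIsometryEquiv rfl, fun x => ?_⟩
  have : (li.toLinearIsometryEquiv rfl) x = T x := rfl
  rw [this, hTdef]
  simp only [smul_inv_smul₀ hr.ne']
  abel

lemma sim_image_eq {d : ℕ} {S : Euc d → Euc d} {r : ℝ} (e : Euc d ≃ₗᵢ[ℝ] Euc d)
    (he : ∀ x, S x = S 0 + r • e x) (A : Set (Euc d)) :
    S '' A = S 0 +ᵥ (r • (e '' A)) := by
  ext z
  simp only [Set.mem_vadd_set, Set.mem_smul_set, Set.mem_image]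
  constructor
  · rintro ⟨x, hx, rfl⟩
    refine ⟨r • e x, ⟨e x, ⟨x, hx, rfl⟩, rfl⟩, ?_⟩
    rw [vadd_eq_add, ← he x]
  · rintro ⟨y, ⟨w, ⟨x, hx, rfl⟩, rfl⟩, rfl⟩
    exact ⟨x, hx, by rw [he x, vadd_eq_add]⟩

lemma sim_volume {d : ℕ} {S : Euc d → Euc d} {r : ℝ} (hr : 0 < r) (e : Euc d ≃ₗᵢ[ℝ] Euc d)
    (he : ∀ x, S x = S 0 + r • e x) (A : Set (Euc d)) (hA : MeasurableSet A) :
    volume (S '' A) = ENNReal.ofReal (r ^ d) * volume A := by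
  rw [sim_image_eq e he A, measure_vadd, Measure.addHaar_smul,
    finrank_euclideanSpace_fin, abs_of_pos (pow_pos hr d)]
  congr 1
  rw [show e '' A = e.symm ⁻¹' A from ?_]
  · exact e.symm.measurePreserving.measure_preimage hA.nullMeasurableSet
  · ext z
    constructor
    · rintro ⟨x, hx, rfl⟩; simpa using hx
    · intro hz; exact ⟨e.symm z, hz, by simp⟩

lemma sim_isOpenMap {d : ℕ} {S : Euc d → Euc d} {r : ℝ} (hr : 0 < r) (e : Euc d ≃ₗᵢ[ℝ] Euc d)
    (he : ∀ x, S x = S 0 + r • e x) : IsOpenMap S := by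
  intro U hU
  rw [sim_image_eq e he U]
  have h1 : IsOpen (e '' U) := e.toHomeomorph.isOpenMap U hU
  have h2 : IsOpen (r • (e '' U)) := h1.smul₀ hr.ne'
  exact h2.vadd _

def wordMap {d N : ℕ} (S : Fin N → Euc d → Euc d) : (n : ℕ) → (Fin n → Fin N) → Euc d → Euc d
  | 0, _ => id
  | n + 1, w => S (w 0) ∘ wordMap S n (w ∘ Fin.succ)

lemma wordMap_dist {d N : ℕ} {S : Fin N → Euc d → Euc d} {r : Fin N → ℝ}
    (hsim : ∀ i x y, dist (S i x) (S i y) = r i * dist x y) :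
    ∀ (n : ℕ) (w : Fin n → Fin N) (x y : Euc d),
      dist (wordMap S n w x) (wordMap S n w y) = (∏ i, r (w i)) * dist x y := by
  intro n
  induction n with
  | zero => intro w x y; simp [wordMap]
  | succ n ih =>
    intro w x y
    rw [wordMap, Function.comp_apply, Function.comp_apply, hsim, ih, Fin.prod_univ_succ]
    simp only [Function.comp_apply]
    ring

lemma wordMap_image_subset {d N : ℕ} {S : Fin N → Euc d → Euc d} {F : Set (Euc d)}
    (hFinv : F = ⋃ i, S i '' F) :
    ∀ (n : ℕ) (w : Fin n → Fin N), wordMap S n w '' F ⊆ F := by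
  intro n
  induction n with
  | zero => intro w; simp [wordMap]
  | succ n ih =>
    intro w
    rw [wordMap, Set.image_comp]
    refine subset_trans (Set.image_mono (ih _)) ?_
    conv_rhs => rw [hFinv]
    exact Set.subset_iUnion (fun i => S i '' F) (w 0)

lemma wordMap_cover {d N : ℕ} {S : Fin N → Euc d → Euc d} {F : Set (Euc d)}
    (hFinv : F = ⋃ i, S i '' F) :
    ∀ n : ℕ, F ⊆ ⋃ w : Fin n → Fin N, wordMap S n w '' F := by
  intro n
  induction n with
  | zero =>
    intro x hx
    exact Set.mem_iUnion.2 ⟨fun i => i.elim0, by simpa [wordMap] using hx⟩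
  | succ n ih =>
    intro x hx
    rw [hFinv] at hx
    obtain ⟨i, y, hy, rfl⟩ := by simpa using hx
    obtain ⟨w', z, hz, hzy⟩ := by simpa using ih hy
    refine Set.mem_iUnion.2 ⟨Fin.cons i w', ⟨z, hz, ?_⟩⟩
    rw [wordMap]
    simp only [Function.comp_apply, Fin.cons_zero]
    rw [show (Fin.cons i w' ∘ Fin.succ) = w' from funext fun j => by simp]
    rw [hzy]

lemma wordMap_sum {N : ℕ} (g : Fin N → ℝ) :
    ∀ n : ℕ, ∑ w : Fin n → Fin N, ∏ i, g (w i) = (∑ i, g i) ^ n := by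
  intro n
  induction n with
  | zero => simp
  | succ n ih =>
    rw [← (Fin.consEquiv (fun _ : Fin (n+1) => Fin N)).sum_comp (fun w => ∏ i, g (w i))]
    rw [Fintype.sum_prod_type]
    have : ∀ (i : Fin N) (w' : Fin n → Fin N),
        (∏ j, g ((Fin.consEquiv (fun _ : Fin (n+1) => Fin N)) (i, w') j))
          = g i * ∏ j, g (w' j) := by
      intro i w'
      rw [Fin.prod_univ_succ]
      simp [Fin.consEquiv]
    simp only [this, ← Finset.mul_sum]
    rw [← Finset.sum_mul, ih, pow_succ]
    ring

/-- If `F ⊆ ℝ^d` is the attractor of a self-similar system satisfying the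
open set condition, and the Minkowski (box) dimension of `F` equals `d`, then `F` is
Minkowski measurable of dimension `d` with Minkowski content `M_d(F) = λ_d(F) > 0`. -/
theorem stmt1 (d N : ℕ) (hN : 2 ≤ N)
    (S : Fin N → Euc d → Euc d) (r : Fin N → ℝ)
    (hr : ∀ i, r i ∈ Set.Ioo (0 : ℝ) 1)
    (hsim : ∀ i x y, dist (S i x) (S i y) = r i * dist x y)
    (F : Set (Euc d)) (hFne : F.Nonempty) (hFcomp : IsCompact F)
    (hFinv : F = ⋃ i, S i '' F)
    -- open set condition
    (O : Set (Euc d)) (hOne : O.Nonempty) (hOopen : IsOpen O)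
    (hOmap : ∀ i, S i '' O ⊆ O)
    (hOdisj : ∀ i j, i ≠ j → Disjoint (S i '' O) (S j '' O))
    -- the Minkowski (box) dimension of `F` equals `d`
    (hdim : Tendsto
      (fun ε : ℝ => (d : ℝ) - Real.log ((volume (pSet F ε)).toReal) / Real.log ε)
      (𝓝[>] (0 : ℝ)) (𝓝 (d : ℝ))) :
    -- the `d`-dimensional Minkowski content exists, equals `λ_d(F)`, and is positive
    Tendsto (fun ε : ℝ => (volume (pSet F ε)).toReal) (𝓝[>] (0 : ℝ))
      (𝓝 ((volume F).toReal)) ∧ 0 < (volume F).toReal := by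
    classical
  -- generic setup
  have hvolF_ne_top : volume F ≠ ⊤ := hFcomp.measure_lt_top.ne
  have hpSet_eq : ∀ ε : ℝ, 0 ≤ ε → pSet F ε = Metric.cthickening ε F := by
    intro ε hε
    ext x
    rw [pSet, Set.mem_setOf_eq, Metric.mem_cthickening_iff, Metric.infDist,
      ← ENNReal.le_ofReal_iff_toReal_le (Metric.infEdist_ne_top hFne) hε]
  have htendA : Tendsto (fun ε => volume (Metric.cthickening ε F)) (𝓝 0) (𝓝 (volume F)) :=
    tendsto_measure_cthickening_of_isCompact hFcomp
  have partA : Tendsto (fun ε : ℝ => (volume (pSet F ε)).toReal) (𝓝[>] (0:ℝ))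
      (𝓝 ((volume F).toReal)) := by
    have h1 : Tendsto (fun ε : ℝ => (volume (Metric.cthickening ε F)).toReal) (𝓝 0)
        (𝓝 ((volume F).toReal)) := (ENNReal.tendsto_toReal hvolF_ne_top).comp htendA
    refine Tendsto.congr' ?_ (h1.mono_left nhdsWithin_le_nhds)
    filter_upwards [self_mem_nhdsWithin] with ε (hε : (0:ℝ) < ε)
    rw [hpSet_eq ε hε.le]
  refine ⟨partA, ?_⟩
  -- setup for positivity
  have hNpos : 0 < N := by omega
  have : Nonempty (Fin N) := ⟨⟨0, hNpos⟩⟩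
  set i0 : Fin N := ⟨0, hNpos⟩ with hi0
  obtain ⟨x0F, hx0F⟩ := id hFne
  set D := Metric.diam F with hD
  have hD0 : 0 ≤ D := Metric.diam_nonneg
  set rmin := Finset.univ.inf' Finset.univ_nonempty r with hrmin
  set rmax := Finset.univ.sup' Finset.univ_nonempty r with hrmax
  have hrmin_le : ∀ i, rmin ≤ r i := fun i => Finset.inf'_le r (Finset.mem_univ i)
  have hrmax_ge : ∀ i, r i ≤ rmax := fun i => Finset.le_sup' r (Finset.mem_univ i)
  have hrmin_pos : 0 < rmin := by
    obtain ⟨i, -, hi⟩ := Finset.exists_mem_eq_inf' Finset.univ_nonempty r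
    rw [hrmin, hi]; exact (hr i).1
  have hrmin_lt1 : rmin < 1 := lt_of_le_of_lt (hrmin_le i0) (hr i0).2
  have hrmax_pos : 0 < rmax := lt_of_lt_of_le (hr i0).1 (hrmax_ge i0)
  have hrmax_lt1 : rmax < 1 := by
    obtain ⟨i, -, hi⟩ := Finset.exists_mem_eq_sup' Finset.univ_nonempty r
    rw [hrmax, hi]; exact (hr i).2
  set q := ∑ i, r i ^ d with hqdef
  have hq_pos : 0 < q :=
    Finset.sum_pos (fun i _ => pow_pos (hr i).1 d) Finset.univ_nonempty
  -- similarity decompositions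
  have hdec : ∀ i, ∃ e : Euc d ≃ₗᵢ[ℝ] Euc d, ∀ x, S i x = S i 0 + r i • e x :=
    fun i => sim_decomp (hr i).1 (hsim i)
  choose es hes using hdec
  have hvol_img : ∀ (i) (A : Set (Euc d)), MeasurableSet A →
      volume (S i '' A) = ENNReal.ofReal (r i ^ d) * volume A :=
    fun i => sim_volume (hr i).1 (es i) (hes i)
  have hopen_map : ∀ i, IsOpenMap (S i) := fun i => sim_isOpenMap (hr i).1 (es i) (hes i)
  have hSF : ∀ i, S i '' F ⊆ F := by
    intro i
    conv_rhs => rw [hFinv]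
    exact Set.subset_iUnion (fun i => S i '' F) i
  have hinfD : ∀ (i) (x : Euc d), Metric.infDist (S i x) F ≤ r i * Metric.infDist x F := by
    intro i x
    obtain ⟨y, hyF, hxy⟩ := hFcomp.exists_infDist_eq_dist hFne x
    calc Metric.infDist (S i x) F ≤ dist (S i x) (S i y) :=
          Metric.infDist_le_dist_of_mem (hSF i ⟨y, hyF, rfl⟩)
      _ = r i * dist x y := hsim i x y
      _ = r i * Metric.infDist x F := by rw [hxy]
  set K := volume (Metric.ball (0 : Euc d) 1) with hK
  have hK_pos : 0 < K := Metric.measure_ball_pos volume 0 one_pos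
  have hK_ne_top : K ≠ ⊤ := (Metric.isBounded_ball.measure_lt_top).ne
  -- lower volume bound for parallel sets
  have hlow : ∀ ε : ℝ, 0 < ε → ENNReal.ofReal (ε ^ d) * K ≤ volume (pSet F ε) := by
    intro ε hε
    have hsub : Metric.closedBall x0F ε ⊆ pSet F ε := by
      intro x hx
      exact le_trans (Metric.infDist_le_dist_of_mem hx0F) (Metric.mem_closedBall.1 hx)
    calc ENNReal.ofReal (ε ^ d) * K = volume (Metric.closedBall x0F ε) := by
          rw [Measure.addHaar_closedBall volume x0F hε.le, finrank_euclideanSpace_fin]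
      _ ≤ volume (pSet F ε) := measure_mono hsub
  have hfin : ∀ ε : ℝ, 0 ≤ ε → volume (pSet F ε) ≠ ⊤ := by
    intro ε hε
    rw [hpSet_eq ε hε]
    exact hFcomp.isBounded.cthickening.measure_lt_top.ne
  -- covering upper bound
  have hcov : ∀ n : ℕ, volume (pSet F (rmin ^ n))
      ≤ ENNReal.ofReal ((D + 1) ^ d * q ^ n) * K := by
    intro n
    have hεpos : 0 < rmin ^ n := pow_pos hrmin_pos n
    have hprod_pos : ∀ w : Fin n → Fin N, 0 < ∏ i, r (w i) :=
      fun w => Finset.prod_pos fun i _ => (hr (w i)).1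
    have hprod_ge : ∀ w : Fin n → Fin N, rmin ^ n ≤ ∏ i, r (w i) := by
      intro w
      calc rmin ^ n = ∏ _i : Fin n, rmin := by
            rw [Finset.prod_const, Finset.card_univ, Fintype.card_fin]
        _ ≤ ∏ i, r (w i) :=
            Finset.prod_le_prod (fun i _ => hrmin_pos.le) (fun i _ => hrmin_le (w i))
    have cover : pSet F (rmin ^ n) ⊆
        ⋃ w : Fin n → Fin N,
          Metric.closedBall (wordMap S n w x0F) ((∏ i, r (w i)) * (D + 1)) := by
      intro x hx
      have hx' : Metric.infDist x F ≤ rmin ^ n := hx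
      obtain ⟨y, hyF, hxy⟩ := hFcomp.exists_infDist_eq_dist hFne x
      obtain ⟨w, z, hzF, hzy⟩ := by simpa using wordMap_cover hFinv n hyF
      refine Set.mem_iUnion.2 ⟨w, ?_⟩
      rw [Metric.mem_closedBall]
      have h1 : dist x y ≤ rmin ^ n := by rw [← hxy]; exact hx'
      have h2 : dist y (wordMap S n w x0F) = (∏ i, r (w i)) * dist z x0F := by
        rw [← hzy, wordMap_dist hsim]
      have h3 : dist z x0F ≤ D := Metric.dist_le_diam_of_mem hFcomp.isBounded hzF hx0F
      have h4 := hprod_ge w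
      have h5 := (hprod_pos w).le
      calc dist x (wordMap S n w x0F) ≤ dist x y + dist y (wordMap S n w x0F) :=
            dist_triangle _ _ _
        _ ≤ rmin ^ n + (∏ i, r (w i)) * D := by
            rw [h2]
            exact add_le_add h1 (mul_le_mul_of_nonneg_left h3 h5)
        _ ≤ (∏ i, r (w i)) * (D + 1) := by nlinarith
    have hballvol : ∀ w : Fin n → Fin N,
        volume (Metric.closedBall (wordMap S n w x0F) ((∏ i, r (w i)) * (D + 1)))
          = ENNReal.ofReal (((∏ i, r (w i)) * (D + 1)) ^ d) * K := by
      intro w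
      rw [Measure.addHaar_closedBall volume _ (mul_nonneg (hprod_pos w).le (by linarith)), finrank_euclideanSpace_fin]
    calc volume (pSet F (rmin ^ n))
        ≤ ∑ w : Fin n → Fin N,
            volume (Metric.closedBall (wordMap S n w x0F) ((∏ i, r (w i)) * (D + 1))) :=
          le_trans (measure_mono cover) (measure_iUnion_fintype_le _ _)
      _ = ENNReal.ofReal (∑ w : Fin n → Fin N, ((∏ i, r (w i)) * (D + 1)) ^ d) * K := by
          simp only [hballvol]
          rw [← Finset.sum_mul, ← ENNReal.ofReal_sum_of_nonneg
            (fun w _ => pow_nonneg (mul_nonneg (hprod_pos w).le (by linarith)) d)]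
      _ = ENNReal.ofReal ((D + 1) ^ d * q ^ n) * K := by
          congr 2
          have : ∀ w : Fin n → Fin N, ((∏ i, r (w i)) * (D + 1)) ^ d
              = (D + 1) ^ d * ∏ i, r (w i) ^ d := by
            intro w
            rw [mul_pow, ← Finset.prod_pow]
            ring
          rw [Finset.sum_congr rfl fun w _ => this w, ← Finset.mul_sum,
            wordMap_sum (fun i => r i ^ d) n]

  -- Step B1 : 1 ≤ q
  have hq1 : 1 ≤ q := by
    by_contra hq
    push_neg at hq
    have hLtend : Tendsto (fun ε : ℝ => Real.log ((volume (pSet F ε)).toReal) / Real.log ε)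
        (𝓝[>] (0:ℝ)) (𝓝 0) := by
      have h := hdim.const_sub (d : ℝ)
      simp only [sub_sub_cancel, sub_self] at h
      exact h
    have hseq : Tendsto (fun n : ℕ => rmin ^ n) atTop (𝓝[>] (0:ℝ)) :=
      tendsto_pow_atTop_nhdsWithin_zero_of_lt_one hrmin_pos hrmin_lt1
    have hLn := hLtend.comp hseq
    set C := (D + 1) ^ d * K.toReal with hC
    have hKt_pos : 0 < K.toReal := ENNReal.toReal_pos hK_pos.ne' hK_ne_top
    have hCpos : 0 < C := mul_pos (pow_pos (by linarith) d) hKt_pos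
    -- the real-valued covering bound
    have hVle : ∀ n : ℕ, (volume (pSet F (rmin ^ n))).toReal ≤ C * q ^ n := by
      intro n
      have h1 := hcov n
      have h2 : (ENNReal.ofReal ((D + 1) ^ d * q ^ n) * K).toReal = C * q ^ n := by
        rw [ENNReal.toReal_mul, ENNReal.toReal_ofReal (by positivity)]
        ring
      rw [← h2]
      exact ENNReal.toReal_mono (ENNReal.mul_ne_top ENNReal.ofReal_ne_top hK_ne_top) h1
    have hVpos : ∀ n : ℕ, 0 < (volume (pSet F (rmin ^ n))).toReal := by
      intro n
      have hεpos : 0 < rmin ^ n := pow_pos hrmin_pos n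
      refine ENNReal.toReal_pos ?_ (hfin _ hεpos.le)
      have hp : 0 < ENNReal.ofReal ((rmin ^ n) ^ d) * K :=
        ENNReal.mul_pos (ENNReal.ofReal_pos.2 (pow_pos hεpos d)).ne' hK_pos.ne'
      exact (lt_of_lt_of_le hp (hlow _ hεpos)).ne'
    have hrl : Real.log rmin < 0 := Real.log_neg hrmin_pos hrmin_lt1
    have hql : Real.log q < 0 := Real.log_neg hq_pos hq
    -- lower bound for the log-ratio along the sequence
    have hlb : ∀ n : ℕ, 1 ≤ n →
        Real.log C / (n * Real.log rmin) + Real.log q / Real.log rmin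
          ≤ Real.log ((volume (pSet F (rmin ^ n))).toReal) / Real.log (rmin ^ n) := by
      intro n hn
      have hnR : (0:ℝ) < n := by exact_mod_cast hn
      have hden : (n : ℝ) * Real.log rmin < 0 := mul_neg_of_pos_of_neg hnR hrl
      have hlogV : Real.log ((volume (pSet F (rmin ^ n))).toReal)
          ≤ Real.log C + n * Real.log q := by
        calc Real.log ((volume (pSet F (rmin ^ n))).toReal) ≤ Real.log (C * q ^ n) :=
              Real.log_le_log (hVpos n) (hVle n)
          _ = Real.log C + n * Real.log q := by
              rw [Real.log_mul hCpos.ne' (by positivity), Real.log_pow]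
      have hsum : Real.log C / (n * Real.log rmin) + Real.log q / Real.log rmin
          = (Real.log C + n * Real.log q) / (n * Real.log rmin) := by
        have hn0 : (n:ℝ) ≠ 0 := hnR.ne'
        have hlr0 : Real.log rmin ≠ 0 := hrl.ne
        field_simp
      rw [hsum, Real.log_pow]
      exact div_le_div_of_nonpos_of_le hden.le hlogV
    -- limit of the lower-bound sequence
    have hg : Tendsto (fun n : ℕ => Real.log C / (n * Real.log rmin) + Real.log q / Real.log rmin)
        atTop (𝓝 (0 + Real.log q / Real.log rmin)) := by
      refine Tendsto.add ?_ tendsto_const_nhds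
      have heq : (fun n : ℕ => Real.log C / (n * Real.log rmin))
          = fun n : ℕ => (Real.log C / Real.log rmin) * (1 / n) := by
        funext n
        rw [mul_comm (n:ℝ), ← div_div, div_eq_mul_one_div (Real.log C / Real.log rmin)]
      rw [heq]
      simpa using (tendsto_one_div_atTop_nhds_zero_nat).const_mul (Real.log C / Real.log rmin)
    have hle0 : 0 + Real.log q / Real.log rmin ≤ 0 := by
      refine le_of_tendsto_of_tendsto hg hLn ?_
      filter_upwards [eventually_ge_atTop 1] with n hn
      exact hlb n hn
    have : 0 < Real.log q / Real.log rmin := div_pos_of_neg_of_neg hql hrl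
    linarith

  -- Step B2 : positive volume
  have hFpos : 0 < volume F := by
    -- a bounded feasible open set near F
    set U := {x : Euc d | Metric.infDist x F < 1} with hU
    have hUopen : IsOpen U := isOpen_lt (Metric.continuous_infDist_pt F) continuous_const
    -- find a point of O close to F, using the fixed point of S i0
    have hcontr : ContractingWith ⟨r i0, (hr i0).1.le⟩ (S i0) := by
      constructor
      · exact_mod_cast (hr i0).2
      · refine LipschitzWith.of_dist_le_mul fun x y => ?_
        rw [hsim i0 x y]
        exact le_rfl
    set p := ContractingWith.fixedPoint (S i0) hcontr with hp
    have hpfix : S i0 p = p := hcontr.fixedPoint_isFixedPt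
    have hiterF : ∀ k : ℕ, (S i0)^[k] x0F ∈ F := by
      intro k
      induction k with
      | zero => exact hx0F
      | succ k ih => rw [Function.iterate_succ_apply']; exact hSF i0 ⟨_, ih, rfl⟩
    have hpF : p ∈ F := by
      refine hFcomp.isClosed.mem_of_tendsto (hcontr.tendsto_iterate_fixedPoint x0F)
        (Filter.Eventually.of_forall hiterF)
    obtain ⟨x0, hx0⟩ := hOne
    have hiterO : ∀ k : ℕ, (S i0)^[k] x0 ∈ O := by
      intro k
      induction k with
      | zero => exact hx0
      | succ k ih => rw [Function.iterate_succ_apply']; exact hOmap i0 ⟨_, ih, rfl⟩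
    have htend := hcontr.tendsto_iterate_fixedPoint x0
    have hev : ∀ᶠ k in atTop, (S i0)^[k] x0 ∈ Metric.ball p 1 :=
      htend.eventually (Metric.ball_mem_nhds p one_pos)
    obtain ⟨k, hk⟩ := hev.exists
    have hO'ne : (O ∩ U).Nonempty := by
      refine ⟨(S i0)^[k] x0, hiterO k, ?_⟩
      have : Metric.infDist ((S i0)^[k] x0) F ≤ dist ((S i0)^[k] x0) p :=
        Metric.infDist_le_dist_of_mem hpF
      exact lt_of_le_of_lt this (Metric.mem_ball.1 hk)
    have hO'open : IsOpen (O ∩ U) := hOopen.inter hUopen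
    have hO'pos : 0 < volume (O ∩ U) := hO'open.measure_pos volume hO'ne
    -- the feasible set is mapped into itself
    have hSO' : ∀ i, S i '' (O ∩ U) ⊆ O ∩ U := by
      intro i x hx
      obtain ⟨y, ⟨hyO, hyU⟩, rfl⟩ := hx
      refine ⟨hOmap i ⟨y, hyO, rfl⟩, ?_⟩
      have h1 : Metric.infDist (S i y) F ≤ r i * Metric.infDist y F := hinfD i y
      have h2 : Metric.infDist y F < 1 := hyU
      have h3 : 0 ≤ Metric.infDist y F := Metric.infDist_nonneg
      have : r i * Metric.infDist y F < 1 := by nlinarith [(hr i).1, (hr i).2]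
      exact lt_of_le_of_lt h1 this
    -- iterated unions
    set Aset : ℕ → Set (Euc d) :=
      fun n => Nat.rec (O ∩ U) (fun _ ih => ⋃ i, S i '' ih) n with hAset
    have hA0 : Aset 0 = O ∩ U := rfl
    have hAsucc : ∀ n, Aset (n + 1) = ⋃ i, S i '' Aset n := fun n => rfl
    have hAsub : ∀ n, Aset n ⊆ O ∩ U := by
      intro n
      induction n with
      | zero => exact subset_rfl
      | succ n ih =>
        rw [hAsucc]
        exact Set.iUnion_subset fun i =>
          subset_trans (Set.image_mono ih) (hSO' i)
    have hAopen : ∀ n, IsOpen (Aset n) := by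
      intro n
      induction n with
      | zero => exact hO'open
      | succ n ih =>
        rw [hAsucc]
        exact isOpen_iUnion fun i => hopen_map i _ ih
    have hAvol : ∀ n, volume (O ∩ U) ≤ volume (Aset n) := by
      intro n
      induction n with
      | zero => exact le_rfl
      | succ n ih =>
        have hdisj : Pairwise (Function.onFun Disjoint fun i => S i '' Aset n) := by
          intro i j hij
          exact (hOdisj i j hij).mono
            (Set.image_mono ((hAsub n).trans Set.inter_subset_left))
            (Set.image_mono ((hAsub n).trans Set.inter_subset_left))
        rw [hAsucc, measure_iUnion hdisj
          (fun i => ((hopen_map i) _ (hAopen n)).measurableSet)]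
        have heq : ∀ i : Fin N, volume (S i '' Aset n)
            = ENNReal.ofReal (r i ^ d) * volume (Aset n) :=
          fun i => hvol_img i _ (hAopen n).measurableSet
        calc volume (O ∩ U) ≤ volume (Aset n) := ih
          _ = 1 * volume (Aset n) := (one_mul _).symm
          _ ≤ ENNReal.ofReal q * volume (Aset n) := by
              refine mul_le_mul_left (ENNReal.one_le_ofReal.2 hq1) _
          _ = ∑ i, volume (S i '' Aset n) := by
              simp only [heq]
              rw [← Finset.sum_mul, ← ENNReal.ofReal_sum_of_nonneg
                (fun i _ => pow_nonneg (hr i).1.le d)]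
          _ = ∑' i, volume (S i '' Aset n) := (tsum_fintype _).symm
    have hApset : ∀ n, Aset n ⊆ pSet F (rmax ^ n) := by
      intro n
      induction n with
      | zero =>
        intro x hx
        have : Metric.infDist x F < 1 := (hAsub 0 hx).2
        simpa [pSet] using this.le
      | succ n ih =>
        rw [hAsucc]
        refine Set.iUnion_subset fun i => ?_
        rintro x ⟨y, hy, rfl⟩
        have h1 : Metric.infDist y F ≤ rmax ^ n := ih hy
        have h2 : Metric.infDist (S i y) F ≤ r i * Metric.infDist y F := hinfD i y
        have h3 : r i * Metric.infDist y F ≤ rmax * rmax ^ n := by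
          refine mul_le_mul (hrmax_ge i) h1 Metric.infDist_nonneg hrmax_pos.le
        have : Metric.infDist (S i y) F ≤ rmax ^ (n + 1) := by
          rw [pow_succ']
          exact h2.trans h3
        exact this
    -- conclude
    have hlim2 : Tendsto (fun n : ℕ => volume (Metric.cthickening (rmax ^ n) F)) atTop
        (𝓝 (volume F)) :=
      htendA.comp (tendsto_pow_atTop_nhds_zero_of_lt_one hrmax_pos.le hrmax_lt1)
    have hbound : ∀ n : ℕ, volume (O ∩ U) ≤ volume (Metric.cthickening (rmax ^ n) F) := by
      intro n
      rw [← hpSet_eq _ (pow_pos hrmax_pos n).le]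
      exact le_trans (hAvol n) (measure_mono (hApset n))
    exact lt_of_lt_of_le hO'pos (ge_of_tendsto' hlim2 hbound)

  exact ENNReal.toReal_pos hFpos.ne' hvolF_ne_top
end

section
/- (Renewal theorem, Cesàro averages.) Let p_1, …, p_N ∈ (0,1) with Σ_{i=1}^N p_i = 1, let y_1, …, y_N > 0, and set η := Σ_{i=1}^N y_i p_i. Let z : ℝ → ℝ have a discrete set of discontinuities and satisfy |z(t)| ≤ c_1 e^{−c_2 |t|} for all t ∈ ℝ, for some constants 0 < c_1, c_2 < ∞. Let Z : ℝ → ℝ satisfy the renewal equation Z(t) = z(t) + Σ_{i=1}^N p_i Z(t − y_i) for all t and lim_{t→−∞} Z(t) = 0. Then, irrespective of any lattice condition on the y_i, lim_{T→∞} (1/T) ∫_0^T Z(t) dt = (1/η) ∫_{−∞}^∞ z(t) dt. -/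
open MeasureTheory Filter Set Topology

noncomputable def auxP {N : ℕ} (p y : Fin N → ℝ) (f : ℝ → ℝ) : ℝ → ℝ :=
  fun t => ∑ i, p i * f (t - y i)

lemma auxP_add {N : ℕ} (p y : Fin N → ℝ) (f g : ℝ → ℝ) :
    auxP p y (f + g) = auxP p y f + auxP p y g := by
  funext t
  simp [auxP, mul_add, Finset.sum_add_distrib]

lemma auxP_iter_add {N : ℕ} (p y : Fin N → ℝ) (n : ℕ) (f g : ℝ → ℝ) :
    (auxP p y)^[n] (f + g) = (auxP p y)^[n] f + (auxP p y)^[n] g := by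
  induction n generalizing f g with
  | zero => rfl
  | succ n ih =>
    rw [Function.iterate_succ_apply, Function.iterate_succ_apply,
      Function.iterate_succ_apply, auxP_add, ih]

lemma auxP_iter_bound {N : ℕ} {p y : Fin N → ℝ}
    (hp : ∀ i, 0 < p i) (hpsum : ∑ i, p i = 1) {m : ℝ} (hym : ∀ i, m ≤ y i)
    (n : ℕ) (f : ℝ → ℝ) {B : ℝ} :
    ∀ t, (∀ s, s ≤ t - n * m → |f s| ≤ B) → |(auxP p y)^[n] f t| ≤ B := by
  induction n with
  | zero =>
    intro t hf
    simpa using hf t (by simp)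
  | succ n ih =>
    intro t hf
    rw [Function.iterate_succ_apply']
    show |∑ i, p i * (auxP p y)^[n] f (t - y i)| ≤ B
    calc |∑ i, p i * (auxP p y)^[n] f (t - y i)|
        ≤ ∑ i, |p i * (auxP p y)^[n] f (t - y i)| := Finset.abs_sum_le_sum_abs _ _
      _ ≤ ∑ i, p i * B := by
          refine Finset.sum_le_sum fun i _ => ?_
          rw [abs_mul, abs_of_pos (hp i)]
          refine mul_le_mul_of_nonneg_left ?_ (hp i).le
          refine ih (t - y i) fun s hs => hf s ?_
          have h1 : m ≤ y i := hym i
          push_cast at hs ⊢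
          nlinarith
      _ = B := by rw [← Finset.sum_mul, hpsum, one_mul]

lemma auxP_iter_z_bound {N : ℕ} {p y : Fin N → ℝ}
    (hp : ∀ i, 0 < p i) (hpsum : ∑ i, p i = 1) {m : ℝ} (hm : 0 < m) (hym : ∀ i, m ≤ y i)
    {z : ℝ → ℝ} {c₁ c₂ : ℝ} (hc₂ : 0 < c₂)
    (hzbd : ∀ t : ℝ, |z t| ≤ c₁ * Real.exp (-c₂ * |t|)) :
    ∀ (n : ℕ) (t : ℝ),
      |(auxP p y)^[n] z t| ≤ c₁ * Real.exp (c₂ * t) * (Real.exp (-(c₂ * m)))^n := by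
  have hc₁ : 0 ≤ c₁ := by
    have := (abs_nonneg (z 0)).trans (hzbd 0)
    nlinarith [Real.exp_pos (-c₂ * |(0:ℝ)|)]
  intro n
  induction n with
  | zero =>
    intro t
    refine (hzbd t).trans ?_
    rw [pow_zero, mul_one]
    refine mul_le_mul_of_nonneg_left ?_ hc₁
    exact Real.exp_le_exp.2 (by nlinarith [neg_abs_le t, abs_nonneg t])
  | succ n ih =>
    intro t
    rw [Function.iterate_succ_apply']
    show |∑ i, p i * (auxP p y)^[n] z (t - y i)| ≤ _
    calc |∑ i, p i * (auxP p y)^[n] z (t - y i)|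
        ≤ ∑ i, |p i * (auxP p y)^[n] z (t - y i)| := Finset.abs_sum_le_sum_abs _ _
      _ ≤ ∑ i, p i * (c₁ * Real.exp (c₂ * t) * (Real.exp (-(c₂ * m)))^(n+1)) := by
          refine Finset.sum_le_sum fun i _ => ?_
          rw [abs_mul, abs_of_pos (hp i)]
          refine mul_le_mul_of_nonneg_left ?_ (hp i).le
          refine (ih (t - y i)).trans ?_
          rw [pow_succ]
          have h1 : Real.exp (c₂ * (t - y i)) ≤ Real.exp (c₂ * t) * Real.exp (-(c₂ * m)) := by
            rw [← Real.exp_add]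
            exact Real.exp_le_exp.2 (by nlinarith [hym i])
          calc c₁ * Real.exp (c₂ * (t - y i)) * Real.exp (-(c₂ * m)) ^ n
              ≤ c₁ * (Real.exp (c₂ * t) * Real.exp (-(c₂ * m))) * Real.exp (-(c₂ * m)) ^ n :=
                mul_le_mul_of_nonneg_right (mul_le_mul_of_nonneg_left h1 hc₁)
                  (pow_nonneg (Real.exp_pos _).le n)
            _ = c₁ * Real.exp (c₂ * t) * (Real.exp (-(c₂ * m)) ^ n * Real.exp (-(c₂ * m))) := by
                ring
      _ = c₁ * Real.exp (c₂ * t) * (Real.exp (-(c₂ * m)))^(n+1) := by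
          rw [← Finset.sum_mul, hpsum, one_mul]

lemma aux_shift_integral (f : ℝ → ℝ) (c T : ℝ) :
    (∫ t in Iic T, f (t - c)) = ∫ t in Iic (T - c), f t := by
  have h : MeasurePreserving (fun t : ℝ => t - c) volume volume :=
    measurePreserving_sub_right volume c
  have he : MeasurableEmbedding (fun t : ℝ => t - c) :=
    (MeasurableEquiv.subRight c).measurableEmbedding
  have hpre : (fun t : ℝ => t - c) ⁻¹' (Iic (T - c)) = Iic T := by
    ext t; simp [sub_le_sub_iff_right]
  rw [← hpre, h.setIntegral_preimage_emb he]

lemma aux_shift_integrableOn {f : ℝ → ℝ} {c T : ℝ} (hf : IntegrableOn f (Iic (T - c))) :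
    IntegrableOn (fun t => f (t - c)) (Iic T) := by
  have h : MeasurePreserving (fun t : ℝ => t - c) volume volume :=
    measurePreserving_sub_right volume c
  have he : MeasurableEmbedding (fun t : ℝ => t - c) :=
    (MeasurableEquiv.subRight c).measurableEmbedding
  have hpre : (fun t : ℝ => t - c) ⁻¹' (Iic (T - c)) = Iic T := by
    ext t; simp [sub_le_sub_iff_right]
  rw [← hpre]
  exact (h.integrableOn_comp_preimage he).mpr hf

lemma aux_exp_integrableOn_Iic (b T : ℝ) (hb : 0 < b) :
    IntegrableOn (fun t : ℝ => Real.exp (b * t)) (Iic T) := by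
  have h : MeasurePreserving (fun t : ℝ => -t) (volume : Measure ℝ) volume :=
    Measure.measurePreserving_neg _
  have he : MeasurableEmbedding (fun t : ℝ => -t) :=
    (Homeomorph.neg ℝ).measurableEmbedding
  have hpre : (fun t : ℝ => -t) ⁻¹' (Iic T) = Ici (-T) := by
    ext t; simp [neg_le]
  have h2 : IntegrableOn (fun t : ℝ => Real.exp (b * (-t))) (Ici (-T)) := by
    rw [integrableOn_Ici_iff_integrableOn_Ioi]
    simpa [mul_comm, neg_mul, mul_neg] using exp_neg_integrableOn_Ioi (-T) hb
  have := (h.integrableOn_comp_preimage he (f := fun t : ℝ => Real.exp (b * t))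
      (s := Iic T)).mp ?_
  · exact this
  · rw [hpre]
    exact h2

set_option maxHeartbeats 1000000 in
/-- **Renewal theorem, Cesàro averages.**
Let `p_i ∈ (0,1)` with `Σ p_i = 1`, `y_i > 0`, `η = Σ y_i p_i`.  Let `z : ℝ → ℝ` have a
discrete set of discontinuities and satisfy `|z(t)| ≤ c₁ e^{−c₂|t|}`.  Let `Z` solve the
renewal equation `Z(t) = z(t) + Σ p_i Z(t − y_i)` with `Z(t) → 0` as `t → −∞`.  Then,
irrespective of any lattice condition on the `y_i`,
`lim_{T→∞} (1/T) ∫_0^T Z(t) dt = (1/η) ∫_{−∞}^{∞} z(t) dt`. -/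
theorem stmt6 (N : ℕ) (p y : Fin N → ℝ)
    (hp : ∀ i, p i ∈ Set.Ioo (0 : ℝ) 1) (hpsum : ∑ i, p i = 1)
    (hy : ∀ i, 0 < y i)
    (z Z : ℝ → ℝ)
    (hzdisc : DiscreteTopology {t : ℝ // ¬ ContinuousAt z t})
    (c₁ c₂ : ℝ) (hc₁ : 0 < c₁) (hc₂ : 0 < c₂)
    (hzbd : ∀ t : ℝ, |z t| ≤ c₁ * Real.exp (-c₂ * |t|))
    (hZeq : ∀ t : ℝ, Z t = z t + ∑ i, p i * Z (t - y i))
    (hZbot : Tendsto Z atBot (𝓝 0)) :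
    Tendsto (fun T : ℝ => T⁻¹ * ∫ t in (0 : ℝ)..T, Z t) atTop
      (𝓝 ((∑ i, y i * p i)⁻¹ * ∫ t : ℝ, z t)) := by
  -- basic setup
  have hppos : ∀ i, 0 < p i := fun i => (hp i).1
  have hNe : Nonempty (Fin N) := by
    rcases Nat.eq_zero_or_pos N with h | h
    · subst h; simp at hpsum
    · exact ⟨⟨0, h⟩⟩
  have huniv : (Finset.univ : Finset (Fin N)).Nonempty := Finset.univ_nonempty
  set m : ℝ := Finset.univ.inf' huniv y with hmdef
  have hym : ∀ i, m ≤ y i := fun i => Finset.inf'_le _ (Finset.mem_univ i)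
  have hm0 : 0 < m := by
    rw [hmdef, Finset.lt_inf'_iff]
    exact fun i _ => hy i
  set Mx : ℝ := Finset.univ.sup' huniv y with hMxdef
  have hyM : ∀ i, y i ≤ Mx := fun i => Finset.le_sup' _ (Finset.mem_univ i)
  have hMx0 : 0 < Mx := lt_of_lt_of_le (hy hNe.some) (hyM hNe.some)
  set ρ : ℝ := Real.exp (-(c₂ * m)) with hρdef
  have hρ0 : 0 < ρ := Real.exp_pos _
  have hρ1 : ρ < 1 := Real.exp_lt_one_iff.2 (by nlinarith)
  -- series representation of Z
  have hZf : Z = z + auxP p y Z := by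
    funext t
    simpa [auxP] using hZeq t
  have hdecomp : ∀ (n : ℕ) (t : ℝ),
      Z t = (∑ k ∈ Finset.range n, (auxP p y)^[k] z t) + (auxP p y)^[n] Z t := by
    intro n
    induction n with
    | zero => intro t; simp
    | succ n ih =>
      intro t
      have h1 : (auxP p y)^[n] Z t
          = (auxP p y)^[n] z t + (auxP p y)^[n+1] Z t := by
        conv_lhs => rw [hZf]
        rw [auxP_iter_add, Function.iterate_succ_apply]
        rfl
      rw [Finset.sum_range_succ, ih t, h1]
      ring
  have htail : ∀ t, Tendsto (fun n => (auxP p y)^[n] Z t) atTop (𝓝 0) := by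
    intro t
    rw [NormedAddCommGroup.tendsto_nhds_zero]
    intro ε hε
    have h1 : ∀ᶠ s in (atBot : Filter ℝ), ‖Z s‖ < ε / 2 :=
      NormedAddCommGroup.tendsto_nhds_zero.mp hZbot (ε/2) (by positivity)
    obtain ⟨A₀, hA₀⟩ := eventually_atBot.mp h1
    have h2 : ∀ᶠ (n : ℕ) in atTop, t - n * m ≤ A₀ := by
      have h3 : Tendsto (fun n : ℕ => t - n * m) atTop atBot := by
        apply tendsto_atBot_add_const_left
        apply tendsto_neg_atTop_atBot.comp
        exact Tendsto.atTop_mul_const hm0 tendsto_natCast_atTop_atTop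
      exact h3.eventually (eventually_le_atBot A₀)
    filter_upwards [h2] with n hn
    have h4 : |(auxP p y)^[n] Z t| ≤ ε / 2 := by
      refine auxP_iter_bound hppos hpsum hym n Z t fun s hs => ?_
      exact (hA₀ s (hs.trans hn)).le
    calc ‖(auxP p y)^[n] Z t‖ ≤ ε / 2 := h4
      _ < ε := by linarith
  have hZser : ∀ t, Tendsto (fun n => ∑ k ∈ Finset.range n, (auxP p y)^[k] z t)
      atTop (𝓝 (Z t)) := by
    intro t
    have := (tendsto_const_nhds (x := Z t) (f := (atTop : Filter ℕ))).sub (htail t)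
    rw [sub_zero] at this
    refine this.congr fun n => ?_
    rw [hdecomp n t]
    ring
  -- exponential bound on Z
  have hzit := auxP_iter_z_bound hppos hpsum hm0 hym hc₂ hzbd
  have hZbd : ∀ t, |Z t| ≤ c₁ * Real.exp (c₂ * t) * (1 - ρ)⁻¹ := by
    intro t
    have hsum : ∀ n : ℕ, |∑ k ∈ Finset.range n, (auxP p y)^[k] z t|
        ≤ c₁ * Real.exp (c₂ * t) * (1 - ρ)⁻¹ := by
      intro n
      calc |∑ k ∈ Finset.range n, (auxP p y)^[k] z t|
          ≤ ∑ k ∈ Finset.range n, |(auxP p y)^[k] z t| := Finset.abs_sum_le_sum_abs _ _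
        _ ≤ ∑ k ∈ Finset.range n, c₁ * Real.exp (c₂ * t) * ρ^k :=
            Finset.sum_le_sum fun k _ => hzit k t
        _ = c₁ * Real.exp (c₂ * t) * ∑ k ∈ Finset.range n, ρ^k := by
            rw [Finset.mul_sum]
        _ ≤ c₁ * Real.exp (c₂ * t) * (1 - ρ)⁻¹ := by
            refine mul_le_mul_of_nonneg_left ?_ (by positivity)
            have h1 : ∑ k ∈ Finset.range n, ρ^k ≤ ∑' k : ℕ, ρ^k :=
              Summable.sum_le_tsum _ (fun k _ => pow_nonneg hρ0.le k)
                (summable_geometric_of_lt_one hρ0.le hρ1)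
            rwa [tsum_geometric_of_lt_one hρ0.le hρ1] at h1
    exact le_of_tendsto' ((hZser t).abs) hsum
  -- measurability
  have hzmeas : AEStronglyMeasurable z (volume : Measure ℝ) := by
    set S : Set ℝ := {t | ¬ ContinuousAt z t} with hS
    have hcount : S.Countable := (HereditarilyLindelof_LindelofSets S).countable hzdisc
    have hnull : (volume : Measure ℝ) S = 0 := hcount.measure_zero _
    have hcont : ContinuousOn z Sᶜ := fun t ht => (not_not.mp ht).continuousWithinAt
    have := hcont.aestronglyMeasurable (μ := volume) hcount.measurableSet.compl
    rwa [Measure.restrict_congr_set (ae_eq_univ.2 (by rwa [compl_compl])),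
      Measure.restrict_univ] at this
  have hauxmeas : ∀ f : ℝ → ℝ, AEStronglyMeasurable f (volume : Measure ℝ) →
      AEStronglyMeasurable (auxP p y f) (volume : Measure ℝ) := by
    intro f hf
    have : ∀ i : Fin N, AEStronglyMeasurable (fun t => p i * f (t - y i))
        (volume : Measure ℝ) := by
      intro i
      exact (hf.comp_quasiMeasurePreserving
        ((measurePreserving_sub_right volume (y i)).quasiMeasurePreserving)).const_mul _
    exact Finset.aestronglyMeasurable_fun_sum _ fun i _ => this i
  have hPmeas : ∀ n : ℕ, AEStronglyMeasurable ((auxP p y)^[n] z) (volume : Measure ℝ) := by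
    intro n
    induction n with
    | zero => exact hzmeas
    | succ n ih =>
      rw [Function.iterate_succ_apply']
      exact hauxmeas _ ih
  have hZmeas : AEStronglyMeasurable Z (volume : Measure ℝ) := by
    refine aestronglyMeasurable_of_tendsto_ae atTop
      (f := fun n t => ∑ k ∈ Finset.range n, (auxP p y)^[k] z t) (fun n => ?_)
      (ae_of_all _ hZser)
    exact Finset.aestronglyMeasurable_fun_sum _ fun k _ => hPmeas k
  -- integrability
  have hZint : ∀ T, IntegrableOn Z (Iic T) := by
    intro T
    refine Integrable.mono' (((aux_exp_integrableOn_Iic c₂ T hc₂).const_mul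
      (c₁ * (1 - ρ)⁻¹))) hZmeas.restrict (ae_of_all _ fun t => ?_)
    rw [Real.norm_eq_abs]
    calc |Z t| ≤ c₁ * Real.exp (c₂ * t) * (1 - ρ)⁻¹ := hZbd t
      _ = c₁ * (1 - ρ)⁻¹ * Real.exp (c₂ * t) := by ring
  have hzint : Integrable z (volume : Measure ℝ) := by
    have hmaj : Integrable (fun t : ℝ => c₁ * Real.exp (-(c₂ * |t|))) (volume : Measure ℝ) := by
      refine Integrable.const_mul ?_ c₁
      have h1 : IntegrableOn (fun t : ℝ => Real.exp (-(c₂ * |t|))) (Iic 0) := by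
        refine IntegrableOn.congr_fun (aux_exp_integrableOn_Iic c₂ 0 hc₂) ?_ measurableSet_Iic
        intro t ht
        simp only [mem_Iic] at ht
        show Real.exp (c₂ * t) = Real.exp (-(c₂ * |t|))
        rw [abs_of_nonpos ht]
        ring_nf
      have h2 : IntegrableOn (fun t : ℝ => Real.exp (-(c₂ * |t|))) (Ioi 0) := by
        refine IntegrableOn.congr_fun (exp_neg_integrableOn_Ioi 0 hc₂) ?_ measurableSet_Ioi
        intro t ht
        simp only [mem_Ioi] at ht
        show Real.exp (-c₂ * t) = Real.exp (-(c₂ * |t|))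
        rw [abs_of_pos ht]
        ring_nf
      have := h1.union h2
      rwa [Iic_union_Ioi, integrableOn_univ] at this
    refine Integrable.mono' hmaj hzmeas (ae_of_all _ fun t => ?_)
    rw [Real.norm_eq_abs]
    calc |z t| ≤ c₁ * Real.exp (-c₂ * |t|) := hzbd t
      _ = c₁ * Real.exp (-(c₂ * |t|)) := by ring_nf
  have hzintOn : ∀ T, IntegrableOn z (Iic T) := fun T => hzint.integrableOn
  -- the cumulative function and the renewal identity
  set G : ℝ → ℝ := fun T => ∫ t in Iic T, Z t with hGdef
  set gval : ℝ → ℝ := fun T => ∫ t in Iic T, z t with hgvaldef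
  set I : ℝ := ∫ t : ℝ, z t with hIdef
  have hgt : Tendsto gval atTop (𝓝 I) := by
    have hcov : AECover (volume : Measure ℝ) atTop (fun T : ℝ => Iic T) :=
      aecover_Iic tendsto_id
    exact hcov.integral_tendsto_of_countably_generated hzint
  have key : ∀ T, G T = gval T + ∑ i, p i * G (T - y i) := by
    intro T
    have hsh : ∀ i : Fin N, IntegrableOn (fun t => Z (t - y i)) (Iic T) :=
      fun i => aux_shift_integrableOn (hZint (T - y i))
    have e1 : G T = ∫ t in Iic T, (z t + ∑ i, p i * Z (t - y i)) := by
      rw [hGdef]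
      exact setIntegral_congr_fun measurableSet_Iic fun t _ => hZeq t
    rw [e1, integral_add (hzintOn T) (integrable_finset_sum _ fun i _ => (hsh i).const_mul _),
      integral_finset_sum _ fun i _ => (hsh i).const_mul _]
    congr 1
    refine Finset.sum_congr rfl fun i _ => ?_
    rw [MeasureTheory.integral_const_mul, aux_shift_integral]
  set η : ℝ := ∑ i, y i * p i with hηdef
  have hη : 0 < η := by
    rw [hηdef]
    exact Finset.sum_pos (fun i _ => mul_pos (hy i) (hppos i)) huniv
  set u : ℝ → ℝ := fun T => G T - I/η * T with hudef
  have hue : ∀ T, u T = (∑ i, p i * u (T - y i)) + (gval T - I) := by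
    intro T
    have e1 : ∑ i, p i * G (T - y i) = G T - gval T := by
      have := key T; linarith
    have e2 : ∑ i, p i * (T - y i) = T - η := by
      simp only [mul_sub]
      rw [Finset.sum_sub_distrib, ← Finset.sum_mul, hpsum, one_mul, hηdef]
      congr 1
      exact Finset.sum_congr rfl fun i _ => mul_comm _ _
    have e3 : ∑ i, p i * u (T - y i)
        = (∑ i, p i * G (T - y i)) - I/η * ∑ i, p i * (T - y i) := by
      rw [Finset.mul_sum, ← Finset.sum_sub_distrib]
      refine Finset.sum_congr rfl fun i _ => ?_
      simp only [hudef]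
      ring
    have e4 : I/η * η = I := div_mul_cancel₀ I hη.ne'
    rw [e3, e1, e2]
    simp only [hudef]
    nlinarith [e4]
  -- main Tauberian estimate
  have main0 : Tendsto (fun T => T⁻¹ * u T) atTop (𝓝 0) := by
    rw [Metric.tendsto_atTop]
    intro δ hδ
    set ε : ℝ := δ * m / 4 with hεdef
    have hε : 0 < ε := by positivity
    clear_value ε
    obtain ⟨A₁, hA₁⟩ := Metric.tendsto_atTop.mp hgt ε hε
    set A : ℝ := max A₁ 0 with hAdef
    have hA0 : 0 ≤ A := le_max_right _ _
    have hA1le : A₁ ≤ A := le_max_left _ _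
    clear_value A
    have hA : ∀ T, A ≤ T → |gval T - I| ≤ ε := by
      intro T hT
      have := hA₁ T (hA1le.trans hT)
      rw [Real.dist_eq] at this
      exact this.le
    set C : ℝ := (∫ t in Iic A, |Z t|) + |I/η| * (|A| + Mx) with hCdef
    have hC : ∀ s, A - Mx ≤ s → s ≤ A → |u s| ≤ C := by
      intro s h1 h2
      have hGs : |G s| ≤ ∫ t in Iic A, |Z t| := by
        calc |G s| ≤ ∫ t in Iic s, |Z t| := by
              simpa [Real.norm_eq_abs] using norm_integral_le_integral_norm (μ := volume.restrict (Iic s)) Z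
          _ ≤ ∫ t in Iic A, |Z t| := by
              refine setIntegral_mono_set (hZint A).abs (ae_of_all _ fun t => abs_nonneg _) ?_
              exact HasSubset.Subset.eventuallyLE (Iic_subset_Iic.2 h2)
      have hs : |s| ≤ |A| + Mx := by
        rw [abs_le]
        constructor
        · have : -(|A| + Mx) ≤ A - Mx := by
            have := abs_nonneg A
            have := le_abs_self A
            have := neg_abs_le A
            linarith
          linarith
        · exact h2.trans ((le_abs_self A).trans (by linarith))
      calc |u s| ≤ |G s| + |I/η| * |s| := by
            simp only [hudef]
            calc |G s - I/η * s| ≤ |G s| + |I/η * s| := abs_sub _ _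
              _ = |G s| + |I/η| * |s| := by rw [abs_mul]
        _ ≤ (∫ t in Iic A, |Z t|) + |I/η| * (|A| + Mx) := by
            have := abs_nonneg (I/η)
            nlinarith
    clear_value C
    have hind : ∀ n : ℕ, ∀ T, A - Mx ≤ T → T ≤ A + n * m → |u T| ≤ C + n * ε := by
      intro n
      induction n with
      | zero =>
        intro T h1 h2
        simpa using hC T h1 (by simpa using h2)
      | succ n ih =>
        intro T h1 h2
        by_cases hT : T ≤ A + n * m
        · have := ih T h1 hT
          push_cast
          push_cast at this
          nlinarith
        · push_neg at hT
          have hTA : A ≤ T := by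
            have h0 : (0:ℝ) ≤ n * m := by positivity
            linarith
          have herr : |gval T - I| ≤ ε := hA T hTA
          have hterm : ∀ i, |u (T - y i)| ≤ C + n * ε := by
            intro i
            refine ih (T - y i) ?_ ?_
            · have := hyM i; linarith
            · have := hym i
              push_cast at h2
              linarith
          calc |u T| = |(∑ i, p i * u (T - y i)) + (gval T - I)| := by rw [hue T]
            _ ≤ |∑ i, p i * u (T - y i)| + |gval T - I| := abs_add_le _ _
            _ ≤ (∑ i, p i * (C + n * ε)) + ε := by
                refine add_le_add ?_ herr
                refine (Finset.abs_sum_le_sum_abs _ _).trans ?_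
                refine Finset.sum_le_sum fun i _ => ?_
                rw [abs_mul, abs_of_pos (hppos i)]
                exact mul_le_mul_of_nonneg_left (hterm i) (hppos i).le
            _ = C + (n + 1 : ℕ) * ε := by
                rw [← Finset.sum_mul, hpsum, one_mul]
                push_cast
                ring
    -- conclude
    refine ⟨max (A + 1) (4 * (|C| + ε) / δ + 1), fun T hT => ?_⟩
    have hT1 : A + 1 ≤ T := (le_max_left _ _).trans hT
    have hT2 : 4 * (|C| + ε) / δ + 1 ≤ T := (le_max_right _ _).trans hT
    have hTpos : 0 < T := by linarith
    have hTA : A ≤ T := by linarith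
    set n : ℕ := ⌈(T - A) / m⌉₊ with hndef
    have hdiv0 : 0 ≤ (T - A) / m := div_nonneg (by linarith) hm0.le
    have hn1 : T ≤ A + n * m := by
      have := Nat.le_ceil ((T - A) / m)
      rw [div_le_iff₀ hm0] at this
      linarith
    have hn2 : (n : ℝ) < (T - A) / m + 1 := Nat.ceil_lt_add_one hdiv0
    clear_value n
    have hU : |u T| ≤ C + n * ε := hind n T (by linarith) hn1
    have hU2 : |u T| ≤ C + ε + (T - A) * (δ / 4) := by
      have h5 : (n : ℝ) * ε ≤ ((T - A) / m + 1) * ε :=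
        mul_le_mul_of_nonneg_right hn2.le hε.le
      have h6 : ((T - A) / m + 1) * ε = ε + (T - A) * (δ / 4) := by
        rw [hεdef]
        field_simp
        ring
      linarith
    rw [Real.dist_eq, sub_zero, abs_mul, abs_inv, abs_of_pos hTpos]
    have h7 : δ * T ≥ 4 * (|C| + ε) + δ := by
      have : δ * (4 * (|C| + ε) / δ + 1) = 4 * (|C| + ε) + δ := by
        field_simp
      nlinarith
    have h8 : T⁻¹ * |u T| < δ := by
      rw [inv_mul_lt_iff₀ hTpos]
      have hCle : C ≤ |C| := le_abs_self C
      have habs : 0 ≤ |C| := abs_nonneg C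
      nlinarith [abs_nonneg (u T), mul_nonneg hA0 hδ.le]
    linarith [h8]
  -- final assembly
  have hfinal : ∀ᶠ T in (atTop : Filter ℝ),
      T⁻¹ * ∫ t in (0:ℝ)..T, Z t = T⁻¹ * u T + (I/η - T⁻¹ * G 0) := by
    filter_upwards [eventually_ge_atTop (1:ℝ)] with T hT
    have hT0 : T ≠ 0 := by linarith
    have hint : (∫ t in (0:ℝ)..T, Z t) = G T - G 0 :=
      (intervalIntegral.integral_Iic_sub_Iic (hZint 0) (hZint T)).symm
    rw [hint]
    have : G T = u T + I/η * T := by simp only [hudef]; ring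
    rw [this]
    field_simp
    ring
  have hlim2 : Tendsto (fun T : ℝ => T⁻¹ * u T + (I/η - T⁻¹ * G 0)) atTop (𝓝 (I/η)) := by
    have h1 : Tendsto (fun T : ℝ => T⁻¹ * G 0) atTop (𝓝 0) := by
      simpa using tendsto_inv_atTop_zero.mul_const (G 0)
    have h2 : Tendsto (fun T : ℝ => I/η - T⁻¹ * G 0) atTop (𝓝 (I/η)) := by
      simpa using tendsto_const_nhds.sub h1
    simpa using main0.add h2
  have := hlim2.congr' (hfinal.mono fun T h => h.symm)
  rw [show (∑ i, y i * p i)⁻¹ * ∫ t : ℝ, z t = I/η by rw [← hIdef, ← hηdef]; ring]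
  exact this
end
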